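/- Let m ≥ n > d > 0 be integers and let A, B ∈ ℂ[x] be relatively prime with deg A = n−d and deg B = m−d. Let A₁ = [C_m^{n−d}(A_Re) | C_n^{m−d}(B_Re)] and A₂ = [C_m^{n−d}(A_Im) | C_n^{m−d}(B_Im)] (real matrices with m+n−d+1 rows and m+n+2 columns). Then the real block matrix [[A₁, −A₂], [A₂, A₁]] of size 2(m+n−d+1) × 2(m+n+2) has rank exactly 2(m+n−d+1). -/

import Mathlib

open Polynomial Finset Matrix

/-- Entry `(i,j)` of the multiplication matrix `C_k^r(P)`: the coefficient of
`x^{r+k-i}` in `x^{k-j}·P`, i.e. `P.coeff (r + j - i)` when `i ≤ r + j` and `0` otherwise. -/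
noncomputable def convEntry {K : Type*} [Semiring K] (r : ℕ) (P : K[X]) (i j : ℕ) : K :=
  if i ≤ r + j then P.coeff (r + j - i) else 0

/-- Entry function of the horizontal concatenation `[C_m^{n-d}(A) | C_n^{m-d}(B)]`,
a matrix with `m+n-d+1` rows and `m+n+2` columns. -/
noncomputable def cofactorEntry {K : Type*} [Semiring K] (m n d : ℕ) (A B : K[X])
    (i j : ℕ) : K :=
  if j ≤ m then convEntry (n - d) A i j else convEntry (m - d) B i (j - (m + 1))

/-- The matrix `[C_m^{n-d}(A) | C_n^{m-d}(B)]` of size `(m+n-d+1) × (m+n+2)`. -/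
noncomputable def cofactorMat {K : Type*} [Semiring K] (m n d : ℕ) (A B : K[X]) :
    Matrix (Fin (m + n - d + 1)) (Fin (m + n + 2)) K :=
  Matrix.of fun i j => cofactorEntry m n d A B (i : ℕ) (j : ℕ)

/-- The real part of a complex polynomial, taken coefficientwise. -/
noncomputable def rePoly (P : ℂ[X]) : ℝ[X] :=
  Polynomial.ofFinsupp (AddMonoidAlgebra.ofCoeff (P.toFinsupp.coeff.mapRange Complex.re Complex.zero_re))

/-- The imaginary part of a complex polynomial, taken coefficientwise. -/
noncomputable def imPoly (P : ℂ[X]) : ℝ[X] :=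
  Polynomial.ofFinsupp (AddMonoidAlgebra.ofCoeff (P.toFinsupp.coeff.mapRange Complex.im Complex.zero_im))

lemma convEntry_sum (r k i : ℕ) (hi : i ≤ r + k) (P p : ℂ[X]) (hp : p.natDegree ≤ k) :
    ∑ j ∈ Finset.range (k+1), convEntry r P i j * p.coeff (k - j)
      = (P * p).coeff (r + k - i) := by
  set s := r + k - i with hs
  have hps : ∀ b, k < b → p.coeff b = 0 := fun b hb =>
    coeff_eq_zero_of_natDegree_lt (lt_of_le_of_lt hp hb)
  have L1 : ∑ j ∈ Finset.range (k+1), convEntry r P i j * p.coeff (k - j)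
      = ∑ j ∈ Finset.range (k+1), (if j ≤ s then P.coeff (s - j) else 0) * p.coeff j := by
    rw [← Finset.sum_range_reflect]
    apply Finset.sum_congr rfl
    intro j hj
    simp only [Finset.mem_range] at hj
    have h1 : k + 1 - 1 - j = k - j := by omega
    rw [h1]
    have h2 : k - (k - j) = j := by omega
    rw [h2]
    unfold convEntry
    congr 1
    by_cases hc : i ≤ r + (k - j)
    · rw [if_pos hc, if_pos (by omega)]
      congr 1
      omega
    · rw [if_neg hc, if_neg (by omega)]
  have R1 : (P * p).coeff s = ∑ j ∈ Finset.range (s+1), P.coeff (s - j) * p.coeff j := by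
    rw [mul_comm, coeff_mul, Finset.Nat.sum_antidiagonal_eq_sum_range_succ_mk]
    exact Finset.sum_congr rfl fun j _ => mul_comm _ _
  have hsub1 : Finset.range (k+1) ⊆ Finset.range (k+s+2) :=
    Finset.range_subset_range.2 (by omega)
  have hsub2 : Finset.range (s+1) ⊆ Finset.range (k+s+2) :=
    Finset.range_subset_range.2 (by omega)
  have E1 : ∑ j ∈ Finset.range (k+1), (if j ≤ s then P.coeff (s - j) else 0) * p.coeff j
      = ∑ j ∈ Finset.range (k+s+2), (if j ≤ s then P.coeff (s - j) else 0) * p.coeff j := by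
    apply Finset.sum_subset hsub1
    intro x _ hx
    simp only [Finset.mem_range, not_lt] at hx
    rw [hps x (by omega), mul_zero]
  have E2 : ∑ j ∈ Finset.range (s+1), P.coeff (s - j) * p.coeff j
      = ∑ j ∈ Finset.range (k+s+2), (if j ≤ s then P.coeff (s - j) else 0) * p.coeff j := by
    have : ∑ j ∈ Finset.range (s+1), P.coeff (s - j) * p.coeff j
        = ∑ j ∈ Finset.range (s+1), (if j ≤ s then P.coeff (s - j) else 0) * p.coeff j := by
      apply Finset.sum_congr rfl
      intro j hj
      simp only [Finset.mem_range] at hj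
      rw [if_pos (by omega)]
    rw [this]
    apply Finset.sum_subset hsub2
    intro x _ hx
    simp only [Finset.mem_range, not_lt] at hx
    rw [if_neg (by omega), zero_mul]
  rw [L1, E1, R1, E2]

lemma exists_pq (m n d : ℕ) (hmn : n ≤ m) (hdn : d < n)
    (A B : ℂ[X]) (hcop : IsCoprime A B)
    (hA : A.degree = ((n - d : ℕ) : WithBot ℕ)) (hB : B.degree = ((m - d : ℕ) : WithBot ℕ))
    (f : ℂ[X]) (hf : f.degree ≤ ((m + n - d : ℕ) : WithBot ℕ)) :
    ∃ p q : ℂ[X], A * p + B * q = f ∧ p.natDegree ≤ m ∧ q.natDegree ≤ n := by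
  obtain ⟨u, v, huv⟩ := hcop
  have hB0 : B ≠ 0 := by
    intro h
    rw [h, degree_zero] at hB
    exact (by simp : (⊥ : WithBot ℕ) ≠ ((m - d : ℕ) : WithBot ℕ)) hB
  set p := u * f % B with hpdef
  set c := u * f / B with hcdef
  have hp : B * c + p = u * f := EuclideanDomain.div_add_mod _ _
  set q := v * f + c * A with hqdef
  have hsum : A * p + B * q = f := by
    rw [hqdef]; linear_combination A * hp + f * huv
  have hpdeg : p.degree < B.degree := EuclideanDomain.mod_lt _ hB0
  have hpdeg' : p.degree ≤ ((m - d : ℕ) : WithBot ℕ) := le_of_lt (hB ▸ hpdeg)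
  have hpnat : p.natDegree ≤ m := by
    by_cases hp0 : p = 0
    · simp [hp0]
    · have := (degree_eq_natDegree hp0) ▸ hpdeg'
      have : p.natDegree ≤ m - d := by exact_mod_cast this
      omega
  refine ⟨p, q, hsum, hpnat, ?_⟩
  by_cases hq0 : q = 0
  · simp [hq0]
  have hBq : B * q = f - A * p := by linear_combination hsum
  have hAp : (A * p).degree ≤ ((m + n - d : ℕ) : WithBot ℕ) := by
    refine le_trans (degree_mul_le _ _) ?_
    rw [hA]
    refine le_trans (add_le_add le_rfl hpdeg') ?_
    rw [← Nat.cast_add]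
    exact_mod_cast (by omega : (n - d) + (m - d) ≤ m + n - d)
  have h1 : B.degree + q.degree ≤ ((m + n - d : ℕ) : WithBot ℕ) := by
    rw [← degree_mul, hBq]
    exact le_trans (degree_sub_le _ _) (max_le hf hAp)
  rw [hB, degree_eq_natDegree hq0, ← Nat.cast_add] at h1
  have h2 : (m - d) + q.natDegree ≤ m + n - d := by exact_mod_cast h1
  omega

lemma cofactor_mulVec_single (m n d : ℕ) (hmn : n ≤ m) (hdn : d < n)
    (A B : ℂ[X]) (hcop : IsCoprime A B)
    (hA : A.degree = ((n - d : ℕ) : WithBot ℕ)) (hB : B.degree = ((m - d : ℕ) : WithBot ℕ))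
    (i : Fin (m + n - d + 1)) :
    ∃ x : Fin (m + n + 2) → ℂ, (cofactorMat m n d A B) *ᵥ x = Pi.single i 1 := by
  have hf : (X ^ (m + n - d - i.val) : ℂ[X]).degree ≤ ((m + n - d : ℕ) : WithBot ℕ) := by
    rw [degree_X_pow]
    exact_mod_cast Nat.sub_le _ _
  obtain ⟨p, q, hpq, hpdeg, hqdeg⟩ := exists_pq m n d hmn hdn A B hcop hA hB _ hf
  refine ⟨fun j => if (j : ℕ) ≤ m then p.coeff (m - (j : ℕ))
    else q.coeff (n - ((j : ℕ) - (m + 1))), ?_⟩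
  funext i'
  have hi' : (i' : ℕ) ≤ m + n - d := by omega
  let e : Fin (m + 1) ⊕ Fin (n + 1) ≃ Fin (m + n + 2) :=
    finSumFinEquiv.trans (finCongr (by omega))
  have hl : ∀ a : Fin (m + 1), ((e (Sum.inl a)) : ℕ) = (a : ℕ) := by
    intro a; simp [e, finSumFinEquiv_apply_left]
  have hr : ∀ b : Fin (n + 1), ((e (Sum.inr b)) : ℕ) = m + 1 + (b : ℕ) := by
    intro b; simp [e, finSumFinEquiv_apply_right]
  have key : (cofactorMat m n d A B *ᵥ fun j => if (j : ℕ) ≤ m then p.coeff (m - (j : ℕ))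
      else q.coeff (n - ((j : ℕ) - (m + 1)))) i'
      = (A * p).coeff (m + n - d - (i' : ℕ)) + (B * q).coeff (m + n - d - (i' : ℕ)) := by
    simp only [Matrix.mulVec, dotProduct]
    rw [← Equiv.sum_comp e, Fintype.sum_sum_type]
    have S1 : ∀ a : Fin (m + 1),
        cofactorMat m n d A B i' (e (Sum.inl a)) *
          (if ((e (Sum.inl a)) : ℕ) ≤ m then p.coeff (m - ((e (Sum.inl a)) : ℕ))
            else q.coeff (n - (((e (Sum.inl a)) : ℕ) - (m + 1))))
        = convEntry (n - d) A (i' : ℕ) (a : ℕ) * p.coeff (m - (a : ℕ)) := by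
      intro a
      have ha : (a : ℕ) ≤ m := by omega
      simp only [cofactorMat, Matrix.of_apply, cofactorEntry, hl a]
      rw [if_pos ha, if_pos ha]
    have S2 : ∀ b : Fin (n + 1),
        cofactorMat m n d A B i' (e (Sum.inr b)) *
          (if ((e (Sum.inr b)) : ℕ) ≤ m then p.coeff (m - ((e (Sum.inr b)) : ℕ))
            else q.coeff (n - (((e (Sum.inr b)) : ℕ) - (m + 1))))
        = convEntry (m - d) B (i' : ℕ) (b : ℕ) * q.coeff (n - (b : ℕ)) := by
      intro b
      have hb : ¬ (m + 1 + (b : ℕ) ≤ m) := by omega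
      have hb2 : m + 1 + (b : ℕ) - (m + 1) = (b : ℕ) := by omega
      simp only [cofactorMat, Matrix.of_apply, cofactorEntry, hr b]
      rw [if_neg hb, hb2, if_neg hb]
    rw [Finset.sum_congr rfl (fun a _ => S1 a), Finset.sum_congr rfl (fun b _ => S2 b)]
    rw [Fin.sum_univ_eq_sum_range (fun a => convEntry (n - d) A (i' : ℕ) a * p.coeff (m - a)),
      Fin.sum_univ_eq_sum_range (fun b => convEntry (m - d) B (i' : ℕ) b * q.coeff (n - b))]
    rw [convEntry_sum (n - d) m (i' : ℕ) (by omega) A p hpdeg,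
      convEntry_sum (m - d) n (i' : ℕ) (by omega) B q hqdeg]
    congr 2 <;> omega
  rw [key, ← coeff_add, hpq, coeff_X_pow, Pi.single_apply]
  by_cases h : i' = i
  · rw [if_pos h, if_pos (by rw [h])]
  · rw [if_neg h, if_neg (by
      intro hc
      exact h (Fin.ext (by omega)))]

lemma rePoly_coeff (P : ℂ[X]) (k : ℕ) : (rePoly P).coeff k = (P.coeff k).re := rfl

lemma imPoly_coeff (P : ℂ[X]) (k : ℕ) : (imPoly P).coeff k = (P.coeff k).im := rfl

lemma cofactorEntry_complex (m n d : ℕ) (A B : ℂ[X]) (i j : ℕ) :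
    ((cofactorEntry m n d (rePoly A) (rePoly B) i j : ℝ) : ℂ)
      + ((cofactorEntry m n d (imPoly A) (imPoly B) i j : ℝ) : ℂ) * Complex.I
      = cofactorEntry m n d A B i j := by
  unfold cofactorEntry convEntry
  split_ifs <;> simp [rePoly_coeff, imPoly_coeff, Complex.re_add_im]

lemma cofactor_vecMul_eq_zero (m n d : ℕ) (hmn : n ≤ m) (hdn : d < n)
    (A B : ℂ[X]) (hcop : IsCoprime A B)
    (hA : A.degree = ((n - d : ℕ) : WithBot ℕ)) (hB : B.degree = ((m - d : ℕ) : WithBot ℕ))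
    (z : Fin (m + n - d + 1) → ℂ) (hz : z ᵥ* cofactorMat m n d A B = 0) : z = 0 := by
  funext i
  obtain ⟨x, hx⟩ := cofactor_mulVec_single m n d hmn hdn A B hcop hA hB i
  have h : z ⬝ᵥ (cofactorMat m n d A B *ᵥ x) = 0 := by
    rw [Matrix.dotProduct_mulVec, hz, zero_dotProduct]
  rw [hx] at h
  simpa using h

/-- Let `m ≥ n > d > 0` and let `A, B ∈ ℂ[x]` be relatively prime with `deg A = n−d`
and `deg B = m−d`.  With `A₁ = [C_m^{n−d}(A_Re) | C_n^{m−d}(B_Re)]` and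
`A₂ = [C_m^{n−d}(A_Im) | C_n^{m−d}(B_Im)]`, the real block matrix `[[A₁, −A₂], [A₂, A₁]]`
of size `2(m+n−d+1) × 2(m+n+2)` has rank exactly `2(m+n−d+1)`. -/
theorem cofactor_block_rank (m n d : ℕ) (hmn : n ≤ m) (hdn : d < n) (hd : 0 < d)
    (A B : ℂ[X]) (hcop : IsCoprime A B)
    (hA : A.degree = ((n - d : ℕ) : WithBot ℕ)) (hB : B.degree = ((m - d : ℕ) : WithBot ℕ)) :
    (Matrix.fromBlocks
        (cofactorMat m n d (rePoly A) (rePoly B)) (-(cofactorMat m n d (imPoly A) (imPoly B)))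
        (cofactorMat m n d (imPoly A) (imPoly B)) (cofactorMat m n d (rePoly A) (rePoly B))).rank
      = 2 * (m + n - d + 1) := by
  set M₁ := cofactorMat m n d (rePoly A) (rePoly B) with hM₁
  set M₂ := cofactorMat m n d (imPoly A) (imPoly B) with hM₂
  set N := Matrix.fromBlocks M₁ (-M₂) M₂ M₁ with hN
  have hinj : Function.Injective (Nᵀ.mulVecLin) := by
    rw [← LinearMap.ker_eq_bot, LinearMap.ker_eq_bot']
    intro z hz0
    have hz : z ᵥ* N = 0 := by
      rw [← Matrix.mulVec_transpose]
      exact hz0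
    have hcol : ∀ c, ∑ i, z (Sum.inl i) * N (Sum.inl i) c + ∑ i, z (Sum.inr i) * N (Sum.inr i) c = 0 := by
      intro c
      have := congrFun hz c
      rw [Matrix.vecMul, dotProduct, Fintype.sum_sum_type] at this
      exact this
    have h1 : ∀ j, ∑ i, (z (Sum.inl i) * M₁ i j + z (Sum.inr i) * M₂ i j) = 0 := by
      intro j
      have := hcol (Sum.inl j)
      simp only [hN, Matrix.fromBlocks_apply₁₁, Matrix.fromBlocks_apply₂₁] at this
      rw [Finset.sum_add_distrib]
      exact this
    have h2 : ∀ j, ∑ i, (z (Sum.inl i) * M₂ i j - z (Sum.inr i) * M₁ i j) = 0 := by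
      intro j
      have := hcol (Sum.inr j)
      simp only [hN, Matrix.fromBlocks_apply₁₂, Matrix.fromBlocks_apply₂₂,
        Matrix.neg_apply, mul_neg] at this
      rw [Finset.sum_sub_distrib, sub_eq_zero]
      rw [Finset.sum_neg_distrib, neg_add_eq_zero] at this
      exact this
    set zc : Fin (m + n - d + 1) → ℂ := fun i => (z (Sum.inl i) : ℂ) - (z (Sum.inr i) : ℂ) * Complex.I with hzc
    have hzcM : zc ᵥ* cofactorMat m n d A B = 0 := by
      funext j
      rw [Matrix.vecMul, dotProduct]
      have hterm : ∀ i, zc i * cofactorMat m n d A B i j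
          = ((z (Sum.inl i) * M₁ i j + z (Sum.inr i) * M₂ i j : ℝ) : ℂ)
            + ((z (Sum.inl i) * M₂ i j - z (Sum.inr i) * M₁ i j : ℝ) : ℂ) * Complex.I := by
        intro i
        have hM : cofactorMat m n d A B i j
            = ((M₁ i j : ℝ) : ℂ) + ((M₂ i j : ℝ) : ℂ) * Complex.I :=
          (cofactorEntry_complex m n d A B (i : ℕ) (j : ℕ)).symm
        rw [hM, hzc]
        push_cast
        linear_combination (-((z (Sum.inr i) : ℂ) * (M₂ i j : ℂ))) * Complex.I_sq
      rw [Finset.sum_congr rfl fun i _ => hterm i, Finset.sum_add_distrib, ← Finset.sum_mul]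
      rw [← Complex.ofReal_sum, ← Complex.ofReal_sum, h1 j, h2 j]
      simp
    have hzc0 := cofactor_vecMul_eq_zero m n d hmn hdn A B hcop hA hB zc hzcM
    funext r
    rcases r with i | i
    · have := congrFun hzc0 i
      simp only [hzc, Pi.zero_apply, Complex.ext_iff, Complex.sub_re, Complex.sub_im,
        Complex.ofReal_re, Complex.ofReal_im, Complex.mul_re, Complex.mul_im,
        Complex.I_re, Complex.I_im, Complex.zero_re, Complex.zero_im] at this
      rcases this with ⟨h', _⟩
      simpa using h'
    · have := congrFun hzc0 i
      simp only [hzc, Pi.zero_apply, Complex.ext_iff, Complex.sub_re, Complex.sub_im,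
        Complex.ofReal_re, Complex.ofReal_im, Complex.mul_re, Complex.mul_im,
        Complex.I_re, Complex.I_im, Complex.zero_re, Complex.zero_im] at this
      rcases this with ⟨_, h'⟩
      simpa using h'
  have hrank : Nᵀ.rank = Fintype.card (Fin (m + n - d + 1) ⊕ Fin (m + n - d + 1)) := by
    have : Nᵀ.rank = Module.finrank ℝ (LinearMap.range Nᵀ.mulVecLin) := rfl
    rw [this, LinearMap.finrank_range_of_inj hinj, Module.finrank_fintype_fun_eq_card]
  rw [← Matrix.rank_transpose, hrank]
  simp [Fintype.card_sum, two_mul]
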